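/- Let U_n = P_n □ Q_k be the Cartesian product of the n-vertex path P_n = a_1...a_n with the k-dimensional hypercube Q_k. Then for any two vertices b_i, b_j of Q_k, lim_{n→∞} (R_{U_{n+1}}[(a_1,b_i),(a_{n+1},b_j)] − R_{U_n}[(a_1,b_i),(a_n,b_j)]) = 1/2^k. -/

import Mathlib

open Matrix Finset

open Classical in
/-- The Moore–Penrose pseudoinverse of a real square matrix, defined via the
four Penrose conditions (it is unique when it exists). -/
noncomputable def Matrix.mpinv {m : Type*} [Fintype m] [DecidableEq m]
    (A : Matrix m m ℝ) : Matrix m m ℝ :=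
  if h : ∃ B : Matrix m m ℝ,
      A * B * A = A ∧ B * A * B = B ∧ (A * B)ᵀ = A * B ∧ (B * A)ᵀ = B * A
  then h.choose else 0

/-- Effective resistance between `u` and `v` with respect to a (weighted)
Laplacian matrix `L`:  `(e_u - e_v)ᵀ L⁺ (e_u - e_v)`. -/
noncomputable def effRes {m : Type*} [Fintype m] [DecidableEq m]
    (L : Matrix m m ℝ) (u v : m) : ℝ :=
  (Pi.single u 1 - Pi.single v 1) ⬝ᵥ (L.mpinv *ᵥ (Pi.single u 1 - Pi.single v 1))

/-- The (real) Laplacian matrix of a simple graph. -/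
noncomputable def lapm {V : Type*} [Fintype V] [DecidableEq V]
    (G : SimpleGraph V) : Matrix V V ℝ :=
  letI := Classical.decRel G.Adj
  G.lapMatrix ℝ

/-- Resistance distance between two vertices of a simple graph. -/
noncomputable def resDist {V : Type*} [Fintype V] [DecidableEq V]
    (G : SimpleGraph V) (u v : V) : ℝ :=
  effRes (lapm G) u v

/-- Resistance diameter of a simple graph. -/
noncomputable def resDiam {V : Type*} [Fintype V] [DecidableEq V]
    (G : SimpleGraph V) : ℝ :=
  ⨆ p : V × V, resDist G p.1 p.2

/-- The weighted Laplacian of the cone over `G` with apex `Sum.inr ()`: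
edges of `G` have conductance `1` (unit resistance), and each vertex of `G`
is joined to the apex by an edge of conductance `m` (resistance `1/m`). -/
noncomputable def coneLap {V : Type*} [Fintype V] [DecidableEq V]
    (G : SimpleGraph V) (m : ℝ) : Matrix (V ⊕ Unit) (V ⊕ Unit) ℝ :=
  letI := Classical.decRel G.Adj
  let W : Matrix (V ⊕ Unit) (V ⊕ Unit) ℝ := fun i j =>
    match i, j with
    | Sum.inl a, Sum.inl b => if G.Adj a b then 1 else 0
    | Sum.inl _, Sum.inr _ => m
    | Sum.inr _, Sum.inl _ => m
    | Sum.inr _, Sum.inr _ => 0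
  Matrix.of fun i j => (if i = j then ∑ k, W i k else 0) - W i j

/-- The `k`-dimensional hypercube graph `Q_k`. -/
def hypercube (k : ℕ) : SimpleGraph (Fin k → Bool) where
  Adj x y := (Finset.univ.filter fun i => x i ≠ y i).card = 1
  symm := by
    constructor
    intro x y h
    rw [← h]
    congr 1
    ext i
    simp [ne_comm]
  loopless := by constructor; intro x; simp

/-- The join `G + H` of two graphs on disjoint vertex sets. -/
def graphJoin {V W : Type*} (G : SimpleGraph V) (H : SimpleGraph W) :
    SimpleGraph (V ⊕ W) where
  Adj x y :=
    match x, y with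
    | Sum.inl a, Sum.inl b => G.Adj a b
    | Sum.inr a, Sum.inr b => H.Adj a b
    | Sum.inl _, Sum.inr _ => True
    | Sum.inr _, Sum.inl _ => True
  symm := by
    constructor
    rintro (a | a) (b | b) h
    · exact G.symm.symm _ _ h
    · trivial
    · trivial
    · exact H.symm.symm _ _ h
  loopless := by
    constructor
    rintro (a | a) h
    · exact G.loopless.irrefl a h
    · exact H.loopless.irrefl a h


section Aux

lemma effRes_eq_of_mulVec {m : Type*} [Fintype m] [DecidableEq m]
    (L : Matrix m m ℝ) (hsym : Lᵀ = L)
    (hex : ∃ B : Matrix m m ℝ,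
      L * B * L = L ∧ B * L * B = B ∧ (L * B)ᵀ = L * B ∧ (B * L)ᵀ = B * L)
    (u v : m) (w : m → ℝ) (hw : L *ᵥ w = Pi.single u 1 - Pi.single v 1) :
    effRes L u v = w u - w v := by
  unfold effRes Matrix.mpinv
  rw [dif_pos hex]
  obtain ⟨h1, -, -, -⟩ := hex.choose_spec
  set B := hex.choose with hB
  set x : m → ℝ := Pi.single u 1 - Pi.single v 1 with hx
  have key : x ⬝ᵥ (B *ᵥ x) = w ⬝ᵥ x := by
    have hz : B *ᵥ x = (B * L) *ᵥ w := by rw [← hw, mulVec_mulVec]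
    calc x ⬝ᵥ (B *ᵥ x) = ((B * L) *ᵥ w) ⬝ᵥ (L *ᵥ w) := by
          rw [hz, ← hw, dotProduct_comm]
      _ = (((B * L) *ᵥ w) ᵥ* L) ⬝ᵥ w := by rw [dotProduct_mulVec]
      _ = (L *ᵥ ((B * L) *ᵥ w)) ⬝ᵥ w := by
          congr 1
          rw [← hsym, vecMul_transpose, hsym]
      _ = ((L * (B * L)) *ᵥ w) ⬝ᵥ w := by rw [mulVec_mulVec]
      _ = (L *ᵥ w) ⬝ᵥ w := by rw [← Matrix.mul_assoc, h1]
      _ = w ⬝ᵥ x := by rw [hw, dotProduct_comm]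
  rw [key, hx]
  simp [dotProduct_sub]

lemma lapm_symm {V : Type*} [Fintype V] [DecidableEq V] (G : SimpleGraph V) :
    (lapm G)ᵀ = lapm G := by
  letI := Classical.decRel G.Adj
  exact G.isSymm_lapMatrix (R := ℝ)

lemma lapm_mul_allOnes {V : Type*} [Fintype V] [DecidableEq V] (G : SimpleGraph V) :
    lapm G * Matrix.of (fun _ _ : V => (1:ℝ)) = 0 := by
  letI := Classical.decRel G.Adj
  ext i j
  have h := congrFun (G.lapMatrix_mulVec_const_eq_zero (R := ℝ)) i
  simpa [lapm, Matrix.mul_apply, Matrix.mulVec, dotProduct] using h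

lemma exists_pinv_lapm {V : Type*} [Fintype V] [DecidableEq V] [Nonempty V]
    (G : SimpleGraph V) (hc : G.Preconnected) :
    ∃ B : Matrix V V ℝ,
      lapm G * B * lapm G = lapm G ∧ B * lapm G * B = B ∧
      (lapm G * B)ᵀ = lapm G * B ∧ (B * lapm G)ᵀ = B * lapm G := by
  letI := Classical.decRel G.Adj
  set L : Matrix V V ℝ := lapm G with hLdef
  set J : Matrix V V ℝ := Matrix.of (fun _ _ => (1:ℝ)) with hJdef
  have hJT : Jᵀ = J := by ext i j; rfl
  set c : ℝ := (Fintype.card V : ℝ)⁻¹ with hcdef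
  have hcard : 0 < (Fintype.card V : ℝ) := by
    exact_mod_cast Fintype.card_pos
  have hcpos : 0 < c := by positivity
  have hLJ : L * J = 0 := lapm_mul_allOnes G
  have hJL : J * L = 0 := by
    have := congrArg Matrix.transpose hLJ
    rwa [Matrix.transpose_mul, hJT, lapm_symm, Matrix.transpose_zero] at this
  have hJJ : J * J = (Fintype.card V : ℝ) • J := by
    ext i j
    simp [hJdef, Matrix.mul_apply, Matrix.smul_apply]
  set K : Matrix V V ℝ := L + c • J with hKdef
  -- K is invertible
  have hker : ∀ x : V → ℝ, K *ᵥ x = 0 → x = 0 := by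
    intro x hx
    have hquad : x ⬝ᵥ (K *ᵥ x) = 0 := by rw [hx]; simp
    have hJx : x ⬝ᵥ (J *ᵥ x) = (∑ i, x i) ^ 2 := by
      simp only [hJdef, Matrix.mulVec, dotProduct, Matrix.of_apply, mul_one, sq,
        Finset.sum_mul, Finset.mul_sum]
      exact Finset.sum_congr rfl fun i _ => Finset.sum_congr rfl fun j _ => by ring
    have hsplit : x ⬝ᵥ (K *ᵥ x) = x ⬝ᵥ (L *ᵥ x) + c * (∑ i, x i)^2 := by
      rw [hKdef, Matrix.add_mulVec, dotProduct_add, Matrix.smul_mulVec,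
        dotProduct_smul, hJx]
      rfl
    have hL0 : 0 ≤ x ⬝ᵥ (L *ᵥ x) := by
      have := (SimpleGraph.posSemidef_lapMatrix ℝ G).dotProduct_mulVec_nonneg x
      simpa [hLdef, lapm] using this
    have hsq : (∑ i, x i)^2 = 0 := by nlinarith [sq_nonneg (∑ i, x i)]
    have hsum0 : (∑ i, x i) = 0 ∧ x ⬝ᵥ (L *ᵥ x) = 0 :=
      ⟨by exact pow_eq_zero_iff (by norm_num) |>.mp hsq, by nlinarith⟩
    have hconst : ∀ i j : V, x i = x j := by
      have h := (G.lapMatrix_toLinearMap₂'_apply'_eq_zero_iff_forall_reachable x).mp ?_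
      · intro i j; exact h i j (hc i j)
      · rw [Matrix.toLinearMap₂'_apply']
        simpa [hLdef, lapm] using hsum0.2
    funext i
    have hxi : ∑ j, x j = (Fintype.card V : ℝ) * x i := by
      rw [Finset.sum_congr rfl fun j _ => (hconst j i)]
      simp [Finset.sum_const, Finset.card_univ, nsmul_eq_mul]
    have h0 : (Fintype.card V : ℝ) * x i = 0 := by rw [← hxi, hsum0.1]
    simp only [Pi.zero_apply]
    rcases mul_eq_zero.mp h0 with h | h
    · exact absurd h (ne_of_gt hcard)
    · exact h
  have hdet : IsUnit K.det := by
    rw [isUnit_iff_ne_zero]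
    intro h0
    obtain ⟨v, hv, hKv⟩ := (Matrix.exists_mulVec_eq_zero_iff).mpr h0
    exact hv (hker v hKv)
  have hKK : K * K⁻¹ = 1 := Matrix.mul_nonsing_inv K hdet
  have hKK' : K⁻¹ * K = 1 := Matrix.nonsing_inv_mul K hdet
  have hJK : J * K = J := by
    rw [hKdef, Matrix.mul_add, hJL, Matrix.mul_smul, hJJ, zero_add, smul_smul,
      hcdef, inv_mul_cancel₀ (ne_of_gt hcard), one_smul]
  have hKJ : K * J = J := by
    rw [hKdef, Matrix.add_mul, hLJ, Matrix.smul_mul, hJJ, zero_add, smul_smul,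
      hcdef, inv_mul_cancel₀ (ne_of_gt hcard), one_smul]
  have hJKi : J * K⁻¹ = J := by
    calc J * K⁻¹ = (J * K) * K⁻¹ := by rw [hJK]
    _ = J * (K * K⁻¹) := by rw [Matrix.mul_assoc]
    _ = J := by rw [hKK, Matrix.mul_one]
  have hKiJ : K⁻¹ * J = J := by
    calc K⁻¹ * J = K⁻¹ * (K * J) := by rw [hKJ]
    _ = (K⁻¹ * K) * J := by rw [Matrix.mul_assoc]
    _ = J := by rw [hKK', Matrix.one_mul]
  have hLeq : L = K - c • J := by rw [hKdef]; rw [add_sub_cancel_right]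
  have hLB : L * (K⁻¹ - c • J) = 1 - c • J := by
    rw [Matrix.mul_sub, Matrix.mul_smul, hLJ, smul_zero, sub_zero]
    calc L * K⁻¹ = (K - c • J) * K⁻¹ := by rw [← hLeq]
    _ = K * K⁻¹ - c • (J * K⁻¹) := by rw [Matrix.sub_mul, Matrix.smul_mul]
    _ = 1 - c • J := by rw [hKK, hJKi]
  have hBL : (K⁻¹ - c • J) * L = 1 - c • J := by
    rw [Matrix.sub_mul, Matrix.smul_mul, hJL, smul_zero, sub_zero]
    calc K⁻¹ * L = K⁻¹ * (K - c • J) := by rw [← hLeq]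
    _ = K⁻¹ * K - c • (K⁻¹ * J) := by rw [Matrix.mul_sub, Matrix.mul_smul]
    _ = 1 - c • J := by rw [hKK', hKiJ]
  have hJB : J * (K⁻¹ - c • J) = 0 := by
    rw [Matrix.mul_sub, Matrix.mul_smul, hJKi, hJJ, smul_smul, hcdef,
      inv_mul_cancel₀ (ne_of_gt hcard), one_smul, sub_self]
  refine ⟨K⁻¹ - c • J, ?_, ?_, ?_, ?_⟩
  · rw [hLB, Matrix.sub_mul, Matrix.one_mul, Matrix.smul_mul, hJL, smul_zero, sub_zero]
  · rw [Matrix.mul_assoc, ← Matrix.mul_assoc, hBL, Matrix.sub_mul, Matrix.one_mul,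
      Matrix.smul_mul, hJB, smul_zero, sub_zero]
  · rw [hLB, Matrix.transpose_sub, Matrix.transpose_one, Matrix.transpose_smul, hJT]
  · rw [hBL, Matrix.transpose_sub, Matrix.transpose_one, Matrix.transpose_smul, hJT]

section Cube
variable {k : ℕ}

lemma hypercube_adj_flip (b : Fin k → Bool) (i : Fin k) :
    (hypercube k).Adj b (Function.update b i (!b i)) := by
  show (Finset.univ.filter fun j => b j ≠ Function.update b i (!b i) j).card = 1
  have : (Finset.univ.filter fun j => b j ≠ Function.update b i (!b i) j) = {i} := by
    ext j
    simp only [Finset.mem_filter, Finset.mem_univ, true_and, Finset.mem_singleton]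
    constructor
    · intro hj
      by_contra hne
      rw [Function.update_of_ne hne] at hj
      exact hj rfl
    · intro hj
      subst hj
      rw [Function.update_self]
      simp
  rw [this, Finset.card_singleton]

lemma hypercube_adj_exists {b b' : Fin k → Bool} (h : (hypercube k).Adj b b') :
    ∃ i, b' = Function.update b i (!b i) := by
  obtain ⟨i, hi⟩ := Finset.card_eq_one.mp h
  refine ⟨i, funext fun j => ?_⟩
  by_cases hj : j = i
  · subst hj
    rw [Function.update_self]
    have : j ∈ Finset.univ.filter fun l => b l ≠ b' l := hi ▸ Finset.mem_singleton_self j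
    have := (Finset.mem_filter.mp this).2
    cases hb : b j <;> cases hb' : b' j <;> simp_all
  · rw [Function.update_of_ne hj]
    by_contra hne
    have : j ∈ Finset.univ.filter fun l => b l ≠ b' l := by
      simp only [Finset.mem_filter, Finset.mem_univ, true_and]
      exact fun he => hne he.symm
    rw [hi, Finset.mem_singleton] at this
    exact hj this

lemma hypercube_preconnected : (hypercube k).Preconnected := by
  intro b b'
  generalize hd : (Finset.univ.filter fun i => b i ≠ b' i).card = d
  induction d generalizing b with
  | zero =>
    have : b = b' := by
      funext i
      by_contra hne
      have : i ∈ Finset.univ.filter fun i => b i ≠ b' i := by simp [hne]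
      rw [Finset.card_eq_zero.mp hd] at this
      exact absurd this (Finset.notMem_empty i)
    rw [this]
  | succ n ih =>
    have hne : (Finset.univ.filter fun i => b i ≠ b' i).Nonempty := by
      rw [← Finset.card_pos, hd]; omega
    obtain ⟨i, hi⟩ := hne
    have hbi : b i ≠ b' i := (Finset.mem_filter.mp hi).2
    set b2 := Function.update b i (!b i) with hb2
    have hstep : (hypercube k).Reachable b b2 := (hypercube_adj_flip b i).reachable
    have hcard : (Finset.univ.filter fun j => b2 j ≠ b' j).card = n := by
      have hset : (Finset.univ.filter fun j => b2 j ≠ b' j)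
          = (Finset.univ.filter fun j => b j ≠ b' j).erase i := by
        ext j
        simp only [Finset.mem_filter, Finset.mem_univ, true_and, Finset.mem_erase]
        by_cases hj : j = i
        · subst hj
          rw [hb2, Function.update_self]
          constructor
          · intro hcon
            exfalso
            cases hb : b j <;> cases hb' : b' j <;> simp_all
          · intro ⟨hcon, _⟩; exact absurd rfl hcon
        · rw [hb2, Function.update_of_ne hj]
          tauto
      rw [hset, Finset.card_erase_of_mem hi, hd]
      omega
    exact hstep.trans (ih b2 hcard)

/-- character -/
noncomputable def eps (s b : Fin k → Bool) : ℝ := ∏ i, (if s i && b i then (-1:ℝ) else 1)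

lemma eps_comm (s b : Fin k → Bool) : eps s b = eps b s := by
  unfold eps
  exact Finset.prod_congr rfl fun i _ => by rw [Bool.and_comm]

lemma eps_sq (s b : Fin k → Bool) : eps s b * eps s b = 1 := by
  unfold eps
  rw [← Finset.prod_mul_distrib]
  rw [← Finset.prod_const_one (s := (Finset.univ : Finset (Fin k)))]
  exact Finset.prod_congr rfl fun i _ => by by_cases h : s i && b i <;> simp [h]

lemma eps_ne_zero (s b : Fin k → Bool) : eps s b ≠ 0 := by
  intro h
  have := eps_sq s b
  rw [h] at this; simp at this

lemma eps_update (s b : Fin k → Bool) (i : Fin k) :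
    eps s (Function.update b i (!b i)) = (if s i then (-1:ℝ) else 1) * eps s b := by
  unfold eps
  rw [Fintype.prod_eq_mul_prod_compl i, Fintype.prod_eq_mul_prod_compl i
    (fun j => if s j && b j then (-1:ℝ) else 1)]
  have h1 : ∀ j ∈ ({i}ᶜ : Finset (Fin k)),
      (if (s j && Function.update b i (!b i) j) = true then (-1:ℝ) else 1)
      = (if (s j && b j) = true then (-1:ℝ) else 1) := by
    intro j hj
    rw [Function.update_of_ne (by simpa using hj)]
  rw [Finset.prod_congr rfl h1, Function.update_self]
  ring_nf
  cases hs : s i <;> cases hb : b i <;> simp [hs, hb] <;> ring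

lemma eps_flip_fst (s b : Fin k → Bool) (i : Fin k) :
    eps (Function.update s i (!s i)) b = (if b i then (-1:ℝ) else 1) * eps s b := by
  rw [eps_comm, eps_update, eps_comm]

lemma eps_orth (b b' : Fin k → Bool) :
    ∑ s : Fin k → Bool, eps s b * eps s b' = if b = b' then (2^k : ℝ) else 0 := by
  by_cases h : b = b'
  · subst h
    rw [if_pos rfl]
    have : ∀ s : Fin k → Bool, eps s b * eps s b = 1 := fun s => eps_sq s b
    rw [Finset.sum_congr rfl fun s _ => this s, Finset.sum_const, Finset.card_univ]
    simp [Fintype.card_fun]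
  · rw [if_neg h]
    have hex : ∃ i, b i ≠ b' i := by
      by_contra hc
      push_neg at hc
      exact h (funext hc)
    obtain ⟨i, hi⟩ := hex
    apply Finset.sum_ninvolution (g := fun s => Function.update s i (!s i))
    · intro s
      rw [eps_flip_fst, eps_flip_fst]
      have : (if b i then (-1:ℝ) else 1) * (if b' i then (-1:ℝ) else 1) = -1 := by
        cases hb : b i <;> cases hb' : b' i <;> simp_all
      calc eps s b * eps s b' + (if b i then (-1:ℝ) else 1) * eps s b *
            ((if b' i then (-1:ℝ) else 1) * eps s b')
          = eps s b * eps s b' * (1 + (if b i then (-1:ℝ) else 1) *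
            (if b' i then (-1:ℝ) else 1)) := by ring
        _ = 0 := by rw [this]; ring
    · intro s _
      intro hcon
      have := congrFun hcon i
      rw [Function.update_self] at this
      exact (Bool.not_ne_self (s i)) this
    · intro s
      exact Finset.mem_univ _
    · intro s
      funext j
      by_cases hj : j = i
      · subst hj
        simp [Function.update_self]
      · simp [Function.update_of_ne hj]

def wt (s : Fin k → Bool) : ℕ := (Finset.univ.filter fun i => s i = true).card

lemma sum_neighbors_hypercube [DecidableRel (hypercube k).Adj] (b : Fin k → Bool)
    (φ : (Fin k → Bool) → ℝ) :
    ∑ b' ∈ (hypercube k).neighborFinset b, φ b'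
      = ∑ i : Fin k, φ (Function.update b i (!b i)) := by
  symm
  apply Finset.sum_bij (i := fun (i : Fin k) (_ : i ∈ Finset.univ) =>
    Function.update b i (!b i))
  · intro i _
    rw [SimpleGraph.mem_neighborFinset]
    exact hypercube_adj_flip b i
  · intro i _ j _ hij
    by_contra hne
    have h1 := congrFun hij i
    rw [Function.update_self] at h1
    rw [Function.update_of_ne hne] at h1
    exact (Bool.not_ne_self (b i)) h1
  · intro b' hb'
    rw [SimpleGraph.mem_neighborFinset] at hb'
    obtain ⟨i, hi⟩ := hypercube_adj_exists hb'
    exact ⟨i, Finset.mem_univ i, hi.symm⟩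
  · intro i _
    rfl

lemma degree_hypercube [DecidableRel (hypercube k).Adj] (b : Fin k → Bool) :
    (hypercube k).degree b = k := by
  have h := sum_neighbors_hypercube b (fun _ => (1:ℝ))
  rw [Finset.sum_const, Finset.sum_const, Finset.card_univ] at h
  have := congrArg (fun x : ℝ => x) h
  simp only [nsmul_eq_mul, mul_one] at h
  rw [SimpleGraph.degree]
  have hk : Fintype.card (Fin k) = k := Fintype.card_fin k
  exact_mod_cast hk ▸ h

lemma sum_if_wt (s : Fin k → Bool) :
    ∑ i : Fin k, (if s i then (-1:ℝ) else 1) = (k : ℝ) - 2 * (wt s : ℝ) := by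
  have h1 : ∀ i, (if s i then (-1:ℝ) else 1) = 1 - 2 * (if s i = true then (1:ℝ) else 0) := by
    intro i; cases s i <;> norm_num
  rw [Finset.sum_congr rfl fun i _ => h1 i, Finset.sum_sub_distrib]
  rw [← Finset.mul_sum, Finset.sum_boole]
  simp [wt, Finset.card_univ]

lemma eps_neighbor_sum (s b : Fin k → Bool) :
    ∑ i : Fin k, eps s (Function.update b i (!b i))
      = ((k : ℝ) - 2 * (wt s : ℝ)) * eps s b := by
  rw [Finset.sum_congr rfl fun i _ => eps_update s b i, ← Finset.sum_mul, sum_if_wt]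

end Cube

noncomputable def rv (m : ℕ) : ℝ := 1 + m + Real.sqrt ((m:ℝ)^2 + 2*m)

noncomputable def ff (N m : ℕ) (x : ℤ) : ℝ :=
  (rv m ^ ((N:ℤ) - x) + rv m ^ (x - (N:ℤ) + 1)) /
    ((rv m - 1) * (rv m ^ (N:ℤ) - rv m ^ (-(N:ℤ))))

variable {m N : ℕ}

lemma rv_gt_one (hm : 1 ≤ m) : 1 < rv m := by
  unfold rv
  have h1 : (1:ℝ) ≤ (m:ℝ) := by exact_mod_cast hm
  have h2 : 0 ≤ Real.sqrt ((m:ℝ)^2 + 2*m) := Real.sqrt_nonneg _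
  linarith

lemma rv_pos (hm : 1 ≤ m) : 0 < rv m := lt_trans one_pos (rv_gt_one hm)

lemma rv_ne_zero (hm : 1 ≤ m) : rv m ≠ 0 := ne_of_gt (rv_pos hm)

lemma rv_add_inv (hm : 1 ≤ m) : rv m + (rv m)⁻¹ = 2 + 2*m := by
  have hprod : rv m * ((2 + 2*(m:ℝ)) - rv m) = 1 := by
    unfold rv
    have hs : Real.sqrt ((m:ℝ)^2 + 2*m) ^ 2 = (m:ℝ)^2 + 2*m := by
      rw [Real.sq_sqrt]; positivity
    nlinarith [hs]
  have hinv : (rv m)⁻¹ = (2 + 2*(m:ℝ)) - rv m :=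
    (inv_eq_of_mul_eq_one_right hprod).symm ▸ rfl
  rw [hinv]; ring

lemma den_pos (hm : 1 ≤ m) (hN : 1 ≤ N) :
    0 < (rv m - 1) * (rv m ^ (N:ℤ) - rv m ^ (-(N:ℤ))) := by
  have h1 := rv_gt_one hm
  have hgt : 1 < rv m ^ (N:ℤ) := one_lt_zpow₀ h1 (by exact_mod_cast hN)
  have hlt : rv m ^ (-(N:ℤ)) < 1 := by
    rw [_root_.zpow_neg]
    exact inv_lt_one_of_one_lt₀ hgt
  have : 0 < rv m - 1 := by linarith
  nlinarith

lemma den_ne (hm : 1 ≤ m) (hN : 1 ≤ N) :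
    (rv m - 1) * (rv m ^ (N:ℤ) - rv m ^ (-(N:ℤ))) ≠ 0 := ne_of_gt (den_pos hm hN)

lemma ff_rec (hm : 1 ≤ m) (x : ℤ) :
    ff N m (x - 1) + ff N m (x + 1) = (2 + 2*(m:ℝ)) * ff N m x := by
  have hr0 := rv_ne_zero hm
  unfold ff
  rw [← add_div, mul_div_assoc']
  congr 1
  rw [show (N:ℤ) - (x - 1) = ((N:ℤ) - x) + 1 by ring,
    show (x - 1) - (N:ℤ) + 1 = (x - (N:ℤ) + 1) - 1 by ring,
    show (N:ℤ) - (x + 1) = ((N:ℤ) - x) - 1 by ring,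
    show (x + 1) - (N:ℤ) + 1 = (x - (N:ℤ) + 1) + 1 by ring,
    zpow_add_one₀ hr0, zpow_sub_one₀ hr0, zpow_sub_one₀ hr0, zpow_add_one₀ hr0,
    ← rv_add_inv hm]
  field_simp
  simp only [zpow_add_one₀ hr0]
  ring

lemma ff_bd (hm : 1 ≤ m) (hN : 1 ≤ N) : ff N m (-1) - ff N m 0 = 1 := by
  have hr0 := rv_ne_zero hm
  unfold ff
  rw [div_sub_div_same, div_eq_one_iff_eq (den_ne hm hN)]
  rw [show (N:ℤ) - (-1) = (N:ℤ) + 1 by ring,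
    show (-1 : ℤ) - (N:ℤ) + 1 = -(N:ℤ) by ring,
    show (N:ℤ) - 0 = (N:ℤ) by ring,
    show (0:ℤ) - (N:ℤ) + 1 = -(N:ℤ) + 1 by ring,
    zpow_add_one₀ hr0, zpow_add_one₀ hr0]
  ring

lemma ff_sym (hm : 1 ≤ m) : ff N m N = ff N m ((N:ℤ) - 1) := by
  unfold ff
  rw [show (N:ℤ) - (N:ℤ) = 0 by ring, show (N:ℤ) - ((N:ℤ) - 1) = 1 by ring,
    show ((N:ℤ) - 1) - (N:ℤ) + 1 = 0 by ring]
  norm_num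
  rw [add_comm]

lemma pow_inv_lt_one (hm : 1 ≤ m) (hN : 1 ≤ N) : 1 < rv m ^ N :=
  one_lt_pow₀ (rv_gt_one hm) (by omega)

lemma ff_zero_eq (hm : 1 ≤ m) (hN : 1 ≤ N) :
    ff N m 0 = (1 + rv m * ((rv m)⁻¹^2)^N) / ((rv m - 1) * (1 - ((rv m)⁻¹^2)^N)) := by
  have hr0 := rv_ne_zero hm
  have hr1 := rv_gt_one hm
  unfold ff
  rw [show (0:ℤ) - (N:ℤ) + 1 = 1 + (-(N:ℤ)) by ring, zpow_add₀ hr0, zpow_one,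
    show ((N:ℤ) - 0) = (N:ℤ) by ring, _root_.zpow_neg, zpow_natCast]
  have hq : ((rv m)⁻¹^2)^N = ((rv m ^ N)⁻¹)^2 := by
    rw [← inv_pow, ← pow_mul, ← pow_mul, mul_comm]
  rw [hq]
  have ht1 : 1 < rv m ^ N := pow_inv_lt_one hm hN
  set t := rv m ^ N with htdef
  have ht0 : t ≠ 0 := by positivity
  have htinv : t⁻¹ < 1 := inv_lt_one_of_one_lt₀ ht1
  have htinv0 : 0 < t⁻¹ := by positivity
  have hden2 : 1 - (t⁻¹)^2 ≠ 0 := by nlinarith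
  have hden1 : t - t⁻¹ ≠ 0 := by nlinarith
  have hrm1 : rv m - 1 ≠ 0 := by linarith
  field_simp

lemma ff_end_eq (hm : 1 ≤ m) (hN : 1 ≤ N) :
    ff N m ((N:ℤ) - 1)
      = ((rv m + 1) * ((rv m)⁻¹)^N) / ((rv m - 1) * (1 - ((rv m)⁻¹^2)^N)) := by
  have hr0 := rv_ne_zero hm
  have hr1 := rv_gt_one hm
  unfold ff
  rw [show (N:ℤ) - ((N:ℤ) - 1) = 1 by ring,
    show ((N:ℤ) - 1) - (N:ℤ) + 1 = 0 by ring,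
    _root_.zpow_neg, zpow_natCast, zpow_one, zpow_zero]
  have hq : ((rv m)⁻¹^2)^N = ((rv m ^ N)⁻¹)^2 := by
    rw [← inv_pow, ← pow_mul, ← pow_mul, mul_comm]
  have hq1 : ((rv m)⁻¹)^N = (rv m ^ N)⁻¹ := by rw [← inv_pow]
  rw [hq, hq1]
  have ht1 : 1 < rv m ^ N := pow_inv_lt_one hm hN
  generalize hgen : rv m ^ N = t at ht1 ⊢
  have ht0 : t ≠ 0 := by positivity
  have htinv : t⁻¹ < 1 := inv_lt_one_of_one_lt₀ ht1
  have htinv0 : 0 < t⁻¹ := by positivity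
  have hden2 : 1 - (t⁻¹)^2 ≠ 0 := by nlinarith
  have hden1 : t - t⁻¹ ≠ 0 := by nlinarith
  have hrm1 : rv m - 1 ≠ 0 := by linarith
  rw [div_eq_div_iff (mul_ne_zero hrm1 hden1) (mul_ne_zero hrm1 hden2)]
  field_simp

lemma tendsto_q_pow (hm : 1 ≤ m) :
    Filter.Tendsto (fun N : ℕ => ((rv m)⁻¹^2)^N) Filter.atTop (nhds 0) := by
  have hr1 := rv_gt_one hm
  apply tendsto_pow_atTop_nhds_zero_of_lt_one (by positivity)
  have : (rv m)⁻¹ < 1 := inv_lt_one_of_one_lt₀ hr1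
  have : 0 < (rv m)⁻¹ := by positivity
  nlinarith

lemma tendsto_q1_pow (hm : 1 ≤ m) :
    Filter.Tendsto (fun N : ℕ => ((rv m)⁻¹)^N) Filter.atTop (nhds 0) := by
  have hr1 := rv_gt_one hm
  apply tendsto_pow_atTop_nhds_zero_of_lt_one (by positivity)
  exact inv_lt_one_of_one_lt₀ hr1

lemma tendsto_ff_zero (hm : 1 ≤ m) :
    Filter.Tendsto (fun N : ℕ => ff N m 0) Filter.atTop (nhds ((rv m - 1)⁻¹)) := by
  have hr1 := rv_gt_one hm
  have hrm1 : rv m - 1 ≠ 0 := by linarith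
  have hq := tendsto_q_pow hm
  have hnum : Filter.Tendsto (fun N : ℕ => 1 + rv m * ((rv m)⁻¹^2)^N)
      Filter.atTop (nhds 1) := by
    have := (tendsto_const_nhds (x := rv m) (f := Filter.atTop (α := ℕ))).mul hq
    simpa using (tendsto_const_nhds (x := (1:ℝ))).add this
  have hden : Filter.Tendsto (fun N : ℕ => (rv m - 1) * (1 - ((rv m)⁻¹^2)^N))
      Filter.atTop (nhds (rv m - 1)) := by
    have := (tendsto_const_nhds (x := (1:ℝ)) (f := Filter.atTop (α := ℕ))).sub hq
    simpa using (tendsto_const_nhds (x := rv m - 1)).mul this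
  have := hnum.div hden hrm1
  rw [one_div] at this
  apply this.congr'
  filter_upwards [Filter.eventually_ge_atTop 1] with N hN
  exact (ff_zero_eq hm hN).symm

lemma tendsto_ff_end (hm : 1 ≤ m) :
    Filter.Tendsto (fun N : ℕ => ff N m ((N:ℤ) - 1)) Filter.atTop (nhds 0) := by
  have hr1 := rv_gt_one hm
  have hrm1 : rv m - 1 ≠ 0 := by linarith
  have hq := tendsto_q_pow hm
  have hnum : Filter.Tendsto (fun N : ℕ => (rv m + 1) * ((rv m)⁻¹)^N)
      Filter.atTop (nhds 0) := by
    have := (tendsto_const_nhds (x := rv m + 1) (f := Filter.atTop (α := ℕ))).mul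
      (tendsto_q1_pow hm)
    simpa using this
  have hden : Filter.Tendsto (fun N : ℕ => (rv m - 1) * (1 - ((rv m)⁻¹^2)^N))
      Filter.atTop (nhds (rv m - 1)) := by
    have := (tendsto_const_nhds (x := (1:ℝ)) (f := Filter.atTop (α := ℕ))).sub hq
    simpa using (tendsto_const_nhds (x := rv m - 1)).mul this
  have := hnum.div hden hrm1
  rw [zero_div] at this
  apply this.congr'
  filter_upwards [Filter.eventually_ge_atTop 1] with N hN
  exact (ff_end_eq hm hN).symm

section Path
variable {N : ℕ}

lemma path_nbhd_zero [DecidableRel (SimpleGraph.pathGraph N).Adj]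
    (hN : 2 ≤ N) (x : Fin N) (hx : (x : ℕ) = 0) :
    (SimpleGraph.pathGraph N).neighborFinset x = {(⟨1, by omega⟩ : Fin N)} := by
  ext y
  simp only [SimpleGraph.mem_neighborFinset, SimpleGraph.pathGraph_adj, Finset.mem_singleton,
    Fin.ext_iff]
  omega

lemma path_nbhd_last [DecidableRel (SimpleGraph.pathGraph N).Adj]
    (hN : 2 ≤ N) (x : Fin N) (hx : (x : ℕ) = N - 1) :
    (SimpleGraph.pathGraph N).neighborFinset x = {(⟨N - 2, by omega⟩ : Fin N)} := by
  ext y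
  simp only [SimpleGraph.mem_neighborFinset, SimpleGraph.pathGraph_adj, Finset.mem_singleton,
    Fin.ext_iff]
  omega

lemma path_nbhd_mid [DecidableRel (SimpleGraph.pathGraph N).Adj]
    (x : Fin N) (h1 : 0 < (x : ℕ)) (h2 : (x : ℕ) < N - 1) :
    (SimpleGraph.pathGraph N).neighborFinset x
      = {(⟨(x : ℕ) - 1, by omega⟩ : Fin N), (⟨(x : ℕ) + 1, by omega⟩ : Fin N)} := by
  ext y
  simp only [SimpleGraph.mem_neighborFinset, SimpleGraph.pathGraph_adj, Finset.mem_insert,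
    Finset.mem_singleton, Fin.ext_iff]
  omega

lemma path_lap_row (hN : 2 ≤ N) (φ : ℤ → ℝ) (x : Fin N) :
    (lapm (SimpleGraph.pathGraph N) *ᵥ fun t : Fin N => φ (t : ℤ)) x =
      if (x : ℕ) = 0 then φ 0 - φ 1
      else if (x : ℕ) = N - 1 then φ ((N:ℤ) - 1) - φ ((N:ℤ) - 2)
      else 2 * φ (x : ℤ) - φ ((x : ℤ) - 1) - φ ((x : ℤ) + 1) := by
  letI : DecidableRel (SimpleGraph.pathGraph N).Adj :=
    Classical.decRel (SimpleGraph.pathGraph N).Adj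
  show ((SimpleGraph.pathGraph N).lapMatrix ℝ *ᵥ fun t : Fin N => φ (t : ℤ)) x = _
  rw [SimpleGraph.lapMatrix_mulVec_apply, SimpleGraph.degree]
  by_cases hx0 : (x : ℕ) = 0
  · rw [path_nbhd_zero hN x hx0, if_pos hx0]
    simp only [Finset.card_singleton, Finset.sum_singleton]
    have h1 : ((x : ℤ)) = 0 := by exact_mod_cast hx0
    have h2 : (((⟨1, by omega⟩ : Fin N) : ℕ) : ℤ) = 1 := by norm_num
    rw [h1, h2]
    push_cast
    ring
  · by_cases hxl : (x : ℕ) = N - 1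
    · rw [path_nbhd_last hN x hxl, if_neg hx0, if_pos hxl]
      simp only [Finset.card_singleton, Finset.sum_singleton]
      have h1 : ((x : ℤ)) = (N:ℤ) - 1 := by
        have : (x:ℕ) = N - 1 := hxl
        omega
      have h2 : (((⟨N - 2, by omega⟩ : Fin N) : ℕ) : ℤ) = (N:ℤ) - 2 := by
        simp only []
        omega
      rw [h1, h2]
      push_cast
      ring
    · have hx1 : 0 < (x : ℕ) := by omega
      have hx2 : (x : ℕ) < N - 1 := by
        have := x.isLt
        omega
      rw [path_nbhd_mid x hx1 hx2, if_neg hx0, if_neg hxl]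
      have hne : (⟨(x : ℕ) - 1, by omega⟩ : Fin N) ≠ (⟨(x : ℕ) + 1, by omega⟩ : Fin N) := by
        simp only [ne_eq, Fin.ext_iff]
        omega
      rw [Finset.card_insert_of_notMem (by simpa using hne), Finset.sum_insert
        (by simpa using hne)]
      simp only [Finset.card_singleton, Finset.sum_singleton]
      have h2 : (((⟨(x:ℕ) - 1, by omega⟩ : Fin N) : ℕ) : ℤ) = (x : ℤ) - 1 := by
        simp only []
        omega
      have h3 : (((⟨(x:ℕ) + 1, by omega⟩ : Fin N) : ℕ) : ℤ) = (x : ℤ) + 1 := by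
        simp only []
        omega
      rw [h2, h3]
      push_cast
      ring

end Path

section Main

variable {k N : ℕ}

lemma eps_false (b : Fin k → Bool) : eps (fun _ => false) b = 1 := by
  unfold eps; simp

lemma wt_false : wt (fun _ : Fin k => false) = 0 := by
  unfold wt; simp

lemma wt_pos {s : Fin k → Bool} (hs : s ≠ fun _ => false) : 1 ≤ wt s := by
  rw [Nat.one_le_iff_ne_zero]
  intro h0
  apply hs
  funext i
  by_contra hi
  have : i ∈ Finset.univ.filter fun j => s j = true := by
    simp only [Finset.mem_filter, Finset.mem_univ, true_and]
    cases h : s i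
    · exact absurd h hi
    · rfl
  rw [Finset.card_eq_zero.mp h0] at this
  exact absurd this (Finset.notMem_empty i)

lemma ff_row0 {m : ℕ} (hm : 1 ≤ m) (hN : 1 ≤ N) :
    (1 + 2*(m:ℝ)) * ff N m 0 - ff N m 1 = 1 := by
  have h := ff_rec (N := N) hm 0
  norm_num at h
  have hb := ff_bd (N := N) hm hN
  linarith

lemma ff_rowN {m : ℕ} (hm : 1 ≤ m) (hN : 1 ≤ N) :
    (1 + 2*(m:ℝ)) * ff N m ((N:ℤ) - 1) - ff N m ((N:ℤ) - 2) = 0 := by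
  have h := ff_rec (N := N) hm ((N:ℤ) - 1)
  rw [show (N:ℤ) - 1 - 1 = (N:ℤ) - 2 by ring, show (N:ℤ) - 1 + 1 = (N:ℤ) by ring] at h
  have hs := ff_sym (N := N) hm
  linarith

/-- coefficient functions along the path, for each character `s` -/
noncomputable def cf (bi bj : Fin k → Bool) (N : ℕ) (s : Fin k → Bool) (x : ℤ) : ℝ :=
  if s = (fun _ => false) then -(x : ℝ)
  else eps s bi * ff N (wt s) x - eps s bj * ff N (wt s) ((N:ℤ) - 1 - x)

lemma cf_row (bi bj : Fin k → Bool) (hN : 2 ≤ N) (s : Fin k → Bool) (x : Fin N) :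
    (lapm (SimpleGraph.pathGraph N) *ᵥ fun t : Fin N => cf bi bj N s (t : ℤ)) x
      + 2 * (wt s : ℝ) * cf bi bj N s ((x : ℕ) : ℤ)
    = eps s bi * (if (x : ℕ) = 0 then 1 else 0)
      - eps s bj * (if (x : ℕ) = N - 1 then 1 else 0) := by
  rw [path_lap_row hN]
  by_cases hs : s = (fun _ => false)
  · subst hs
    simp only [cf, if_pos rfl, wt_false, eps_false, Nat.cast_zero]
    by_cases hx0 : (x : ℕ) = 0
    · rw [if_pos hx0, if_pos hx0, if_neg (by omega : ¬ (x:ℕ) = N - 1)]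
      norm_num
    · by_cases hxl : (x : ℕ) = N - 1
      · rw [if_neg hx0, if_pos hxl, if_neg hx0, if_pos hxl]
        push_cast
        ring
      · rw [if_neg hx0, if_neg hxl, if_neg hx0, if_neg hxl]
        push_cast
        ring
  · have hm : 1 ≤ wt s := wt_pos hs
    have h1 := ff_row0 (N := N) hm (by omega)
    have h2 := ff_rowN (N := N) hm (by omega)
    simp only [cf, if_neg hs]
    by_cases hx0 : (x : ℕ) = 0
    · rw [if_pos hx0, if_pos hx0, if_neg (by omega : ¬ (x:ℕ) = N - 1)]
      have hxz : (((x : ℕ) : ℤ)) = 0 := by exact_mod_cast hx0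
      rw [hxz]
      rw [show (N:ℤ) - 1 - 0 = (N:ℤ) - 1 by ring, show (N:ℤ) - 1 - 1 = (N:ℤ) - 2 by ring]
      linear_combination eps s bi * h1 - eps s bj * h2
    · by_cases hxl : (x : ℕ) = N - 1
      · rw [if_neg hx0, if_pos hxl, if_neg hx0, if_pos hxl]
        have hxz : (((x : ℕ) : ℤ)) = (N:ℤ) - 1 := by omega
        rw [hxz]
        rw [show (N:ℤ) - 1 - ((N:ℤ) - 1) = 0 by ring,
          show (N:ℤ) - 1 - ((N:ℤ) - 2) = 1 by ring]
        linear_combination eps s bi * h2 - eps s bj * h1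
      · rw [if_neg hx0, if_neg hxl, if_neg hx0, if_neg hxl]
        have hr1 := ff_rec (N := N) hm ((x : ℕ) : ℤ)
        have hr2 := ff_rec (N := N) hm ((N:ℤ) - 1 - ((x : ℕ) : ℤ))
        rw [show (N:ℤ) - 1 - (((x:ℕ):ℤ) - 1) = ((N:ℤ) - 1 - ((x:ℕ):ℤ)) + 1 by ring,
          show (N:ℤ) - 1 - (((x:ℕ):ℤ) + 1) = ((N:ℤ) - 1 - ((x:ℕ):ℤ)) - 1 by ring]
        linear_combination (-(eps s bi)) * hr1 + eps s bj * hr2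

/-- the explicit potential on the product graph -/
noncomputable def wfun (bi bj : Fin k → Bool) (N : ℕ) :
    Fin N × (Fin k → Bool) → ℝ :=
  fun p => (1/2^k) * ∑ s : Fin k → Bool, eps s p.2 * cf bi bj N s ((p.1 : ℕ) : ℤ)

lemma lapm_mulVec_sum {V : Type*} [Fintype V] [DecidableEq V] (G : SimpleGraph V)
    {ι : Type*} [Fintype ι] (g : ι → V → ℝ) (c : ι → ℝ) (a : ℝ) (v : V) :
    (lapm G *ᵥ fun t => a * ∑ i : ι, c i * g i t) v
      = a * ∑ i : ι, c i * (lapm G *ᵥ g i) v := by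
  simp only [Matrix.mulVec, dotProduct, Finset.mul_sum]
  rw [Finset.sum_comm]
  exact Finset.sum_congr rfl fun i _ => Finset.sum_congr rfl fun u _ => by ring

lemma lap_solve (bi bj : Fin k → Bool) (hN : 2 ≤ N) :
    lapm ((SimpleGraph.pathGraph N).boxProd (hypercube k)) *ᵥ wfun bi bj N
      = Pi.single ((⟨0, by omega⟩ : Fin N), bi) (1:ℝ)
        - Pi.single ((⟨N - 1, by omega⟩ : Fin N), bj) 1 := by
  letI : DecidableRel (SimpleGraph.pathGraph N).Adj :=
    Classical.decRel (SimpleGraph.pathGraph N).Adj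
  letI : DecidableRel (hypercube k).Adj := Classical.decRel (hypercube k).Adj
  letI : DecidableRel ((SimpleGraph.pathGraph N).boxProd (hypercube k)).Adj :=
    Classical.decRel ((SimpleGraph.pathGraph N).boxProd (hypercube k)).Adj
  funext p
  obtain ⟨x, b⟩ := p
  show (((SimpleGraph.pathGraph N).boxProd (hypercube k)).lapMatrix ℝ *ᵥ wfun bi bj N) (x, b) = _
  rw [SimpleGraph.lapMatrix_mulVec_apply, SimpleGraph.degree_boxProd,
    SimpleGraph.neighborFinset_boxProd, Finset.sum_disjUnion, Finset.sum_product,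
    Finset.sum_product]
  simp only [Finset.sum_singleton, degree_hypercube]
  rw [Nat.cast_add]
  -- path part as a Laplacian application
  have hpath : ((SimpleGraph.pathGraph N).degree x : ℝ) * wfun bi bj N (x, b)
      - ∑ x' ∈ (SimpleGraph.pathGraph N).neighborFinset x, wfun bi bj N (x', b)
      = (lapm (SimpleGraph.pathGraph N) *ᵥ fun t : Fin N => wfun bi bj N (t, b)) x := by
    show _ = ((SimpleGraph.pathGraph N).lapMatrix ℝ *ᵥ _) x
    rw [SimpleGraph.lapMatrix_mulVec_apply]
  -- cube neighbor sum
  have hcube : ∑ b' ∈ (hypercube k).neighborFinset b, wfun bi bj N (x, b')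
      = (1/2^k) * ∑ s : Fin k → Bool,
          (((k : ℝ) - 2 * (wt s : ℝ)) * eps s b) * cf bi bj N s ((x : ℕ) : ℤ) := by
    have hw : ∀ b', wfun bi bj N (x, b')
        = (1/2^k) * ∑ s : Fin k → Bool, eps s b' * cf bi bj N s ((x : ℕ) : ℤ) :=
      fun b' => rfl
    rw [Finset.sum_congr rfl fun b' _ => hw b', ← Finset.mul_sum, Finset.sum_comm]
    congr 1
    refine Finset.sum_congr rfl fun s _ => ?_
    rw [← Finset.sum_mul, sum_neighbors_hypercube b (fun b' => eps s b'), eps_neighbor_sum]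
  have hlap : (lapm (SimpleGraph.pathGraph N) *ᵥ fun t : Fin N => wfun bi bj N (t, b)) x
      = (1/2^k) * ∑ s : Fin k → Bool,
          eps s b * (lapm (SimpleGraph.pathGraph N) *ᵥ
            fun t : Fin N => cf bi bj N s ((t : ℕ) : ℤ)) x := by
    exact lapm_mulVec_sum (SimpleGraph.pathGraph N)
      (fun s t => cf bi bj N s ((t : ℕ) : ℤ)) (fun s => eps s b) (1/2^k) x
  have step1 : (((SimpleGraph.pathGraph N).degree x : ℝ) + (k : ℝ)) * wfun bi bj N (x, b)
      - ((∑ x' ∈ (SimpleGraph.pathGraph N).neighborFinset x, wfun bi bj N (x', b))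
        + ∑ b' ∈ (hypercube k).neighborFinset b, wfun bi bj N (x, b'))
      = (1/2^k) * ∑ s : Fin k → Bool, eps s b *
          ((lapm (SimpleGraph.pathGraph N) *ᵥ
              fun t : Fin N => cf bi bj N s ((t : ℕ) : ℤ)) x
            + 2 * (wt s : ℝ) * cf bi bj N s ((x : ℕ) : ℤ)) := by
    have expand : (k : ℝ) * wfun bi bj N (x, b)
        = (1/2^k) * ∑ s : Fin k → Bool, ((k : ℝ) * eps s b) * cf bi bj N s ((x : ℕ) : ℤ) := by
      have hw0 : wfun bi bj N (x, b)
          = (1/2^k) * ∑ s : Fin k → Bool, eps s b * cf bi bj N s ((x : ℕ) : ℤ) := rfl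
      rw [hw0, ← mul_assoc, mul_comm (k:ℝ) ((1:ℝ)/2^k), mul_assoc, Finset.mul_sum]
      congr 1
      exact Finset.sum_congr rfl fun s _ => by ring
    calc (((SimpleGraph.pathGraph N).degree x : ℝ) + (k : ℝ)) * wfun bi bj N (x, b)
          - ((∑ x' ∈ (SimpleGraph.pathGraph N).neighborFinset x, wfun bi bj N (x', b))
            + ∑ b' ∈ (hypercube k).neighborFinset b, wfun bi bj N (x, b'))
        = (((SimpleGraph.pathGraph N).degree x : ℝ) * wfun bi bj N (x, b)
            - ∑ x' ∈ (SimpleGraph.pathGraph N).neighborFinset x, wfun bi bj N (x', b))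
          + ((k : ℝ) * wfun bi bj N (x, b)
            - ∑ b' ∈ (hypercube k).neighborFinset b, wfun bi bj N (x, b')) := by ring
      _ = (1/2^k) * ∑ s : Fin k → Bool, eps s b *
            (lapm (SimpleGraph.pathGraph N) *ᵥ
              fun t : Fin N => cf bi bj N s ((t : ℕ) : ℤ)) x
          + ((1/2^k) * ∑ s : Fin k → Bool, ((k : ℝ) * eps s b) * cf bi bj N s ((x : ℕ) : ℤ)
            - (1/2^k) * ∑ s : Fin k → Bool,
                (((k : ℝ) - 2 * (wt s : ℝ)) * eps s b) * cf bi bj N s ((x : ℕ) : ℤ)) := by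
          rw [hpath, hlap, hcube, expand]
      _ = _ := by
          rw [← mul_sub ((1:ℝ)/2^k), ← mul_add ((1:ℝ)/2^k), ← Finset.sum_sub_distrib,
            ← Finset.sum_add_distrib]
          congr 1
          exact Finset.sum_congr rfl fun s _ => by ring
  rw [step1]
  have step2 : ∀ s : Fin k → Bool, eps s b *
      ((lapm (SimpleGraph.pathGraph N) *ᵥ
          fun t : Fin N => cf bi bj N s ((t : ℕ) : ℤ)) x
        + 2 * (wt s : ℝ) * cf bi bj N s ((x : ℕ) : ℤ))
      = (if (x : ℕ) = 0 then 1 else 0) * (eps s b * eps s bi)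
        - (if (x : ℕ) = N - 1 then 1 else 0) * (eps s b * eps s bj) := by
    intro s
    rw [cf_row bi bj hN s x]
    ring
  rw [Finset.sum_congr rfl fun s _ => step2 s, Finset.sum_sub_distrib,
    ← Finset.mul_sum, ← Finset.mul_sum, eps_orth, eps_orth]
  have h2k : (2:ℝ)^k ≠ 0 := by positivity
  rw [Pi.sub_apply, Pi.single_apply, Pi.single_apply]
  have e1 : ((x, b) = ((⟨0, by omega⟩ : Fin N), bi)) ↔ ((x : ℕ) = 0 ∧ b = bi) := by
    rw [Prod.ext_iff, Fin.ext_iff]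
  have e2 : ((x, b) = ((⟨N - 1, by omega⟩ : Fin N), bj)) ↔ ((x : ℕ) = N - 1 ∧ b = bj) := by
    rw [Prod.ext_iff, Fin.ext_iff]
  rw [if_congr e1 rfl rfl, if_congr e2 rfl rfl]
  have h0N : ¬ (0 : ℕ) = N - 1 := by omega
  have hN1 : ¬ (N - 1 : ℕ) = 0 := by omega
  by_cases hx0 : (x : ℕ) = 0
  · have hxl : ¬ (x : ℕ) = N - 1 := by omega
    by_cases hbi : b = bi <;> simp [hx0, hxl, hbi, h2k, h0N] <;> field_simp
  · by_cases hxl : (x : ℕ) = N - 1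
    · by_cases hbj : b = bj <;> simp [hx0, hxl, hbj, h2k, hN1] <;> field_simp
    · simp [hx0, hxl]

noncomputable def ABf (bi bj : Fin k → Bool) (N : ℕ) : ℝ :=
  ∑ s : Fin k → Bool, (if s = (fun _ => false) then 0 else
    2 * ff N (wt s) 0 - 2 * eps s bi * eps s bj * ff N (wt s) ((N:ℤ) - 1))

lemma resDist_formula (bi bj : Fin k → Bool) (n : ℕ) :
    resDist ((SimpleGraph.pathGraph (n + 2)).boxProd (hypercube k))
        (⟨0, Nat.succ_pos (n + 1)⟩, bi) (Fin.last (n + 1), bj)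
      = (1/2^k) * (((n : ℝ) + 1) + ABf bi bj (n + 2)) := by
  have hconn : ((SimpleGraph.pathGraph (n + 2)).boxProd (hypercube k)).Preconnected := by
    have hc : ((SimpleGraph.pathGraph (n + 2)).boxProd (hypercube k)).Connected := by
      rw [SimpleGraph.connected_boxProd]
      refine ⟨SimpleGraph.pathGraph_connected (n + 1), ?_⟩
      rw [SimpleGraph.connected_iff]
      exact ⟨hypercube_preconnected, inferInstance⟩
    exact hc.preconnected
  have hsolve := lap_solve (N := n + 2) bi bj (by omega)
  have h := effRes_eq_of_mulVec _ (lapm_symm _) (exists_pinv_lapm _ hconn) _ _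
    (wfun bi bj (n + 2)) hsolve
  have hv : ((Fin.last (n + 1) : Fin (n + 2)), bj)
      = ((⟨(n + 2) - 1, by omega⟩ : Fin (n + 2)), bj) := rfl
  show effRes (lapm ((SimpleGraph.pathGraph (n + 2)).boxProd (hypercube k)))
    (⟨0, Nat.succ_pos (n + 1)⟩, bi) (Fin.last (n + 1), bj) = _
  rw [hv, h]
  -- now compute the difference of potentials
  have hw1 : wfun bi bj (n + 2) ((⟨0, Nat.succ_pos (n + 1)⟩ : Fin (n + 2)), bi)
      = (1/2^k) * ∑ s : Fin k → Bool, eps s bi * cf bi bj (n + 2) s ((0:ℕ) : ℤ) := rfl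
  have hw2 : wfun bi bj (n + 2) ((⟨(n + 2) - 1, by omega⟩ : Fin (n + 2)), bj)
      = (1/2^k) * ∑ s : Fin k → Bool, eps s bj * cf bi bj (n + 2) s (((n + 1 : ℕ)) : ℤ) := rfl
  rw [hw1, hw2, ← mul_sub, ← Finset.sum_sub_distrib]
  have hterm : ∀ s : Fin k → Bool,
      eps s bi * cf bi bj (n + 2) s ((0:ℕ) : ℤ)
        - eps s bj * cf bi bj (n + 2) s (((n + 1 : ℕ)) : ℤ)
      = (if s = (fun _ => false) then ((n : ℝ) + 1) else
          2 * ff (n + 2) (wt s) 0 - 2 * eps s bi * eps s bj * ff (n + 2) (wt s)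
            (((n + 2 : ℕ) : ℤ) - 1)) := by
    intro s
    by_cases hs : s = (fun _ => false)
    · subst hs
      rw [if_pos rfl]
      simp only [cf, if_pos rfl, eps_false]
      push_cast
      ring
    · rw [if_neg hs]
      simp only [cf, if_neg hs]
      have e0 : ((n + 2 : ℕ) : ℤ) - 1 - ((0:ℕ) : ℤ) = ((n + 2 : ℕ) : ℤ) - 1 := by push_cast; ring
      have e1 : (((n + 1 : ℕ)) : ℤ) = ((n + 2 : ℕ) : ℤ) - 1 := by push_cast; ring
      have e2 : ((n + 2 : ℕ) : ℤ) - 1 - (((n + 2 : ℕ) : ℤ) - 1) = 0 := by ring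
      rw [e0, e1, e2, show ((0:ℕ) : ℤ) = (0:ℤ) from rfl]
      linear_combination (ff (n + 2) (wt s) 0) * eps_sq s bi + (ff (n + 2) (wt s) 0) * eps_sq s bj
  rw [Finset.sum_congr rfl fun s _ => hterm s]
  congr 1
  have hsplit : ∀ s : Fin k → Bool,
      (if s = (fun _ => false) then ((n : ℝ) + 1) else
        2 * ff (n + 2) (wt s) 0 - 2 * eps s bi * eps s bj * ff (n + 2) (wt s)
          (((n + 2 : ℕ) : ℤ) - 1))
      = (if s = (fun _ => false) then ((n : ℝ) + 1) else 0)
        + (if s = (fun _ => false) then 0 else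
            2 * ff (n + 2) (wt s) 0 - 2 * eps s bi * eps s bj * ff (n + 2) (wt s)
              (((n + 2 : ℕ) : ℤ) - 1)) := by
    intro s
    split <;> simp
  rw [Finset.sum_congr rfl fun s _ => hsplit s, Finset.sum_add_distrib,
    Finset.sum_ite_eq' Finset.univ (fun _ => false) (fun _ => ((n : ℝ) + 1))]
  simp only [Finset.mem_univ, if_true]
  rfl

lemma resDist_formula' (bi bj : Fin k → Bool) (n : ℕ) (hn : 1 ≤ n) :
    resDist ((SimpleGraph.pathGraph (n + 1)).boxProd (hypercube k))
        (⟨0, Nat.succ_pos n⟩, bi) (Fin.last n, bj)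
      = (1/2^k) * ((n : ℝ) + ABf bi bj (n + 1)) := by
  obtain ⟨p, rfl⟩ : ∃ p, n = p + 1 := ⟨n - 1, by omega⟩
  have h := resDist_formula bi bj p
  convert h using 2 <;> push_cast <;> ring

lemma tendsto_ABf (bi bj : Fin k → Bool) :
    Filter.Tendsto (fun N => ABf bi bj N) Filter.atTop
      (nhds (∑ s : Fin k → Bool,
        (if s = (fun _ => false) then (0:ℝ) else 2 * (rv (wt s) - 1)⁻¹))) := by
  unfold ABf
  apply tendsto_finset_sum
  intro s _
  by_cases hs : s = (fun _ => false)
  · simp only [if_pos hs]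
    exact tendsto_const_nhds
  · simp only [if_neg hs]
    have hm := wt_pos hs
    have h1 := (tendsto_ff_zero hm).const_mul (2:ℝ)
    have h2 := (tendsto_ff_end hm).const_mul (2 * eps s bi * eps s bj)
    have h := h1.sub h2
    simpa using h

end Main

end Aux

/-- In `U_n = P_n □ Q_k`, the corner-to-corner resistance distances grow with
successive differences tending to `1/2ᵏ`. -/
theorem tendsto_resDist_path_boxProd_hypercube (k : ℕ) (bi bj : Fin k → Bool) :
    Filter.Tendsto (fun n : ℕ =>
        resDist ((SimpleGraph.pathGraph (n + 2)).boxProd (hypercube k))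
            (⟨0, by omega⟩, bi) (Fin.last (n + 1), bj)
          - resDist ((SimpleGraph.pathGraph (n + 1)).boxProd (hypercube k))
              (⟨0, by omega⟩, bi) (Fin.last n, bj))
      Filter.atTop (nhds (1 / 2 ^ k)) := by
  have hC := tendsto_ABf (k := k) bi bj
  set C : ℝ := ∑ s : Fin k → Bool,
    (if s = (fun _ => false) then (0:ℝ) else 2 * (rv (wt s) - 1)⁻¹) with hCdef
  have h2 : Filter.Tendsto (fun n : ℕ => ABf bi bj (n + 2)) Filter.atTop (nhds C) :=
    hC.comp (Filter.tendsto_add_atTop_nat 2)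
  have h1 : Filter.Tendsto (fun n : ℕ => ABf bi bj (n + 1)) Filter.atTop (nhds C) :=
    hC.comp (Filter.tendsto_add_atTop_nat 1)
  have key : Filter.Tendsto
      (fun n : ℕ => ((1:ℝ)/2^k) * (1 + (ABf bi bj (n + 2) - ABf bi bj (n + 1))))
      Filter.atTop (nhds (((1:ℝ)/2^k) * (1 + (C - C)))) :=
    (tendsto_const_nhds.add (h2.sub h1)).const_mul _
  have hval : ((1:ℝ)/2^k) * (1 + (C - C)) = 1/2^k := by ring
  rw [hval] at key
  apply key.congr'
  filter_upwards [Filter.eventually_ge_atTop 1] with n hn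
  rw [resDist_formula bi bj n, resDist_formula' bi bj n hn]
  push_cast
  ring
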